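/- Let ρ, ξ be density matrices on a finite-dimensional Hilbert space H, and let |ψ⟩, |φ⟩ ∈ H ⊗ K be arbitrary purifications of ρ and ξ respectively. Then ‖tr_H(|ψ⟩⟨φ|)‖_tr = F(ρ, ξ). -/

import Mathlib

open scoped ComplexOrder Matrix

/-- Matrix square root: the positive semidefinite square root of a PSD matrix,
with junk value 0 for non-PSD matrices. -/
noncomputable def sqrtM {i : Type} [Fintype i] [DecidableEq i] (A : Matrix i i Complex) :
    Matrix i i Complex :=
  letI := Classical.propDecidable A.PosSemidef
  if h : A.PosSemidef then
    h.1.eigenvectorUnitary.1 * Matrix.diagonal ((↑) ∘ (√·) ∘ h.1.eigenvalues) *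
      (star h.1.eigenvectorUnitary : Matrix i i Complex)
  else 0

/-- Helper: the PSD square root (formerly in Mathlib). -/
noncomputable abbrev Matrix.PosSemidef.sqrt {i : Type} [Fintype i] [DecidableEq i]
    {A : Matrix i i Complex} (h : A.PosSemidef) : Matrix i i Complex :=
  h.1.eigenvectorUnitary.1 * Matrix.diagonal ((↑) ∘ (√·) ∘ h.1.eigenvalues) *
    (star h.1.eigenvectorUnitary : Matrix i i Complex)

lemma Matrix.PosSemidef.posSemidef_sqrt {i : Type} [Fintype i] [DecidableEq i]
    {A : Matrix i i Complex} (h : A.PosSemidef) : h.sqrt.PosSemidef := by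
  have hd : (Matrix.diagonal ((↑) ∘ (√·) ∘ h.1.eigenvalues) : Matrix i i Complex).PosSemidef :=
    Matrix.posSemidef_diagonal_iff.mpr (fun j => by
      simp only [Function.comp_apply]
      exact Complex.zero_le_real.mpr (Real.sqrt_nonneg _))
  exact hd.mul_mul_conjTranspose_same (h.1.eigenvectorUnitary.1)

lemma Matrix.PosSemidef.sqrt_mul_self {i : Type} [Fintype i] [DecidableEq i]
    {A : Matrix i i Complex} (h : A.PosSemidef) : h.sqrt * h.sqrt = A := by
  have hUU' := (Matrix.mem_unitaryGroup_iff').mp h.1.eigenvectorUnitary.2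
  simp only [Matrix.PosSemidef.sqrt, Matrix.mul_assoc]
  rw [← Matrix.mul_assoc (star (h.1.eigenvectorUnitary.1)) (h.1.eigenvectorUnitary.1), hUU',
    Matrix.one_mul, ← Matrix.mul_assoc (Matrix.diagonal _), Matrix.diagonal_mul_diagonal]
  conv_rhs => rw [h.1.spectral_theorem]
  rw [Unitary.conjStarAlgAut_apply, Matrix.mul_assoc]
  congr 3
  funext j
  simp only [Function.comp_apply]
  rw [← Complex.ofReal_mul, Real.mul_self_sqrt (h.eigenvalues_nonneg j)]
  rfl

/-- Trace norm: trace of the square root of X-dagger-X (sum of singular values). -/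
noncomputable def traceNorm {i : Type} [Fintype i] [DecidableEq i] (X : Matrix i i Complex) : Real :=
  ((sqrtM (Xᴴ * X)).trace).re

/-- Fidelity F(rho, xi) = trace of the square root of (sqrt rho * xi * sqrt rho). -/
noncomputable def fidelity {i : Type} [Fintype i] [DecidableEq i] (ρ ξ : Matrix i i Complex) : Real :=
  ((sqrtM (sqrtM ρ * ξ * sqrtM ρ)).trace).re

/-- Outer product of vectors. -/
noncomputable def outer {i : Type} (ψ φ : i → Complex) : Matrix i i Complex :=
  Matrix.of fun p q => ψ p * star (φ q)

/-- Partial trace over the first tensor factor. -/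
noncomputable def ptraceFst {α β : Type} [Fintype α] (X : Matrix (α × β) (α × β) Complex) :
    Matrix β β Complex :=
  Matrix.of fun i j => ∑ a : α, X (a, i) (a, j)

/-- Partial trace over the second tensor factor. -/
noncomputable def ptraceSnd {α β : Type} [Fintype β] (X : Matrix (α × β) (α × β) Complex) :
    Matrix α α Complex :=
  Matrix.of fun i j => ∑ b : β, X (i, b) (j, b)

/-- The extension of a map on matrices by the identity on an auxiliary space. -/
noncomputable def extendId {i k : Type} (f : Matrix i i Complex → Matrix k k Complex)
    (α : Type) (X : Matrix (i × α) (i × α) Complex) : Matrix (k × α) (k × α) Complex :=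
  Matrix.of fun p q => f (Matrix.of fun a b => X (a, p.2) (b, q.2)) p.1 q.1

/-- Complete positivity: all extensions by an identity map PSD matrices to PSD matrices. -/
def IsCompletelyPositive {i k : Type} [Fintype i] [DecidableEq i] [Fintype k] [DecidableEq k]
    (f : Matrix i i Complex → Matrix k k Complex) : Prop :=
  ∀ (r : ℕ) (X : Matrix (i × Fin r) (i × Fin r) Complex), X.PosSemidef →
    (extendId f (Fin r) X).PosSemidef

/-- Trace preservation. -/
def IsTracePreserving {i k : Type} [Fintype i] [Fintype k]
    (f : Matrix i i Complex → Matrix k k Complex) : Prop :=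
  ∀ X : Matrix i i Complex, (f X).trace = X.trace

/-- The diamond norm: the supremum of the trace norms of (f tensor I)(X) over all X of
trace norm one, with the identity on an auxiliary space of the same dimension as the input. -/
noncomputable def dnorm {i k : Type} [Fintype i] [DecidableEq i] [Fintype k] [DecidableEq k]
    (f : Matrix i i Complex → Matrix k k Complex) : Real :=
  sSup {t : Real | ∃ X : Matrix (i × i) (i × i) Complex,
    traceNorm X = 1 ∧ t = traceNorm (extendId f i X)}

open Polynomial Matrix

section Aux

variable {α β : Type} [Fintype α] [DecidableEq α] [Fintype β] [DecidableEq β]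

lemma eval_charpoly' (M : Matrix α α ℂ) (x : ℂ) :
    M.charpoly.eval x = (x • (1 : Matrix α α ℂ) - M).det := by
  rw [Matrix.charpoly, ← Polynomial.coe_evalRingHom, RingHom.map_det]
  congr 1
  ext i j
  by_cases h : i = j <;>
    simp [h, charmatrix_apply, Matrix.one_apply, Matrix.diagonal_apply]

lemma charpoly_transpose' (M : Matrix α α ℂ) : Mᵀ.charpoly = M.charpoly := by
  apply Polynomial.funext
  intro x
  rw [eval_charpoly', eval_charpoly', ← Matrix.det_transpose (x • 1 - M)]
  congr 1
  ext i j
  by_cases h : i = j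
  · simp [h]
  · simp [Matrix.one_apply, h, Ne.symm h]

lemma charpoly_mul_comm' (A : Matrix α β ℂ) (B : Matrix β α ℂ) :
    (A * B).charpoly * X ^ (Fintype.card β) = (B * A).charpoly * X ^ (Fintype.card α) := by
  apply Polynomial.eq_of_infinite_eval_eq
  apply Set.Infinite.mono (s := {(0:ℂ)}ᶜ)
  swap
  · exact Set.Finite.infinite_compl (Set.finite_singleton 0)
  intro x hx
  have hx0 : x ≠ 0 := hx
  simp only [Set.mem_setOf_eq, eval_mul, eval_pow, eval_X, eval_charpoly']
  have key : ∀ {γ δ : Type} [Fintype γ] [DecidableEq γ] [Fintype δ] [DecidableEq δ]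
      (C : Matrix γ δ ℂ) (D : Matrix δ γ ℂ),
      (x • (1 : Matrix γ γ ℂ) - C * D).det
        = x ^ (Fintype.card γ) * (1 + ((-x⁻¹) • C) * D).det := by
    intro γ δ _ _ _ _ C D
    have hmat : x • (1 + ((-x⁻¹) • C) * D) = x • (1 : Matrix γ γ ℂ) - C * D := by
      rw [Matrix.smul_mul, smul_add, smul_smul, mul_neg, mul_inv_cancel₀ hx0]
      simp [sub_eq_add_neg]
    rw [← hmat, Matrix.det_smul]
  rw [key A B, key B A]
  have := Matrix.det_one_add_mul_comm ((-x⁻¹) • A) B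
  rw [this]
  have h2 : B * ((-x⁻¹) • A) = ((-x⁻¹) • B) * A := by
    rw [Matrix.mul_smul, Matrix.smul_mul]
  rw [h2]
  ring

lemma charpoly_isHermitian' {P : Matrix α α ℂ} (hP : P.IsHermitian) :
    P.charpoly = ∏ i, (X - C ((hP.eigenvalues i : ℝ) : ℂ)) := by
  have hsp := hP.spectral_theorem
  set U : Matrix α α ℂ := (hP.eigenvectorUnitary : Matrix α α ℂ) with hU
  have hUU : U * star U = 1 := (Matrix.mem_unitaryGroup_iff).mp hP.eigenvectorUnitary.2
  have hUU' : star U * U = 1 := (Matrix.mem_unitaryGroup_iff').mp hP.eigenvectorUnitary.2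
  have hD : P.charpoly = (Matrix.diagonal ((↑) ∘ hP.eigenvalues : α → ℂ)).charpoly := by
    apply Polynomial.funext
    intro x
    rw [eval_charpoly', eval_charpoly']
    set D := Matrix.diagonal ((↑) ∘ hP.eigenvalues : α → ℂ)
    have : x • (1 : Matrix α α ℂ) - P = U * (x • 1 - D) * star U := by
      rw [hsp]
      rw [Matrix.mul_sub, Matrix.sub_mul]
      congr 1
      rw [Matrix.mul_smul, Matrix.smul_mul, mul_one, hUU]
    rw [this, Matrix.det_mul, Matrix.det_mul, mul_comm, ← mul_assoc, ← Matrix.det_mul, hUU']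
    simp
  rw [hD]
  rw [Matrix.charpoly, charmatrix]
  have : (Matrix.scalar α) X - (RingHom.mapMatrix C) (Matrix.diagonal ((↑) ∘ hP.eigenvalues : α → ℂ))
      = Matrix.diagonal (fun i => X - C ((hP.eigenvalues i : ℝ) : ℂ)) := by
    ext i j
    by_cases h : i = j <;> simp [h, Matrix.diagonal_apply, Matrix.scalar_apply]
  rw [this, Matrix.det_diagonal]

lemma sum_sqrt_eig_eq {P : Matrix α α ℂ} {Q : Matrix β β ℂ}
    (hP : P.IsHermitian) (hQ : Q.IsHermitian)
    (h : P.charpoly * X ^ (Fintype.card β) = Q.charpoly * X ^ (Fintype.card α)) :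
    ∑ i, Real.sqrt (hP.eigenvalues i) = ∑ j, Real.sqrt (hQ.eigenvalues j) := by
  rw [charpoly_isHermitian' hP, charpoly_isHermitian' hQ] at h
  have hroots := congrArg Polynomial.roots h
  have hprodP : (∏ i, (X - C ((hP.eigenvalues i : ℝ) : ℂ)))
      = ((Finset.univ.val.map fun i => ((hP.eigenvalues i : ℝ) : ℂ)).map fun a => X - C a).prod := by
    rw [Multiset.map_map]; rfl
  have hprodQ : (∏ j, (X - C ((hQ.eigenvalues j : ℝ) : ℂ)))
      = ((Finset.univ.val.map fun j => ((hQ.eigenvalues j : ℝ) : ℂ)).map fun a => X - C a).prod := by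
    rw [Multiset.map_map]; rfl
  have hPne : (∏ i, (X - C ((hP.eigenvalues i : ℝ) : ℂ))) ≠ 0 := by
    rw [hprodP]; exact (monic_multiset_prod_of_monic _ _ fun a _ => monic_X_sub_C a).ne_zero
  have hQne : (∏ j, (X - C ((hQ.eigenvalues j : ℝ) : ℂ))) ≠ 0 := by
    rw [hprodQ]; exact (monic_multiset_prod_of_monic _ _ fun a _ => monic_X_sub_C a).ne_zero
  rw [Polynomial.roots_mul (mul_ne_zero hPne (pow_ne_zero _ X_ne_zero)),
      Polynomial.roots_mul (mul_ne_zero hQne (pow_ne_zero _ X_ne_zero)),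
      Polynomial.roots_pow, Polynomial.roots_pow, Polynomial.roots_X, hprodP, hprodQ,
      Polynomial.roots_multiset_prod_X_sub_C, Polynomial.roots_multiset_prod_X_sub_C] at hroots
  have key : ∀ {γ : Type} [Fintype γ] (f : γ → ℝ) (k : ℕ),
      (((Finset.univ.val.map fun i => ((f i : ℝ) : ℂ)) + k • ({0} : Multiset ℂ)).map
        fun z => Real.sqrt z.re).sum = ∑ i, Real.sqrt (f i) := by
    intro γ _ f k
    rw [Multiset.map_add, Multiset.sum_add, Multiset.map_map]
    have h1 : ((k • ({0} : Multiset ℂ)).map fun z => Real.sqrt z.re).sum = 0 := by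
      rw [Multiset.nsmul_singleton, Multiset.map_replicate]
      simp
    rw [h1, add_zero, Finset.sum]
    apply congrArg
    apply Multiset.map_congr rfl
    intro i _
    simp
  have e1 := congrArg (fun s : Multiset ℂ => (s.map fun z => Real.sqrt z.re).sum) hroots
  rw [key hP.eigenvalues (Fintype.card β), key hQ.eigenvalues (Fintype.card α)] at e1
  exact e1

lemma trace_sqrt' {P : Matrix α α ℂ} (hP : P.PosSemidef) :
    hP.sqrt.trace = ((∑ i, Real.sqrt (hP.1.eigenvalues i) : ℝ) : ℂ) := by
  rw [Matrix.PosSemidef.sqrt, Matrix.trace_mul_cycle,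
    (Matrix.mem_unitaryGroup_iff').mp hP.1.eigenvectorUnitary.2, one_mul,
    Matrix.trace_diagonal]
  push_cast
  rfl

lemma trace_sqrtM_eq {P : Matrix α α ℂ} {Q : Matrix β β ℂ}
    (hP : P.PosSemidef) (hQ : Q.PosSemidef)
    (h : P.charpoly * X ^ (Fintype.card β) = Q.charpoly * X ^ (Fintype.card α)) :
    (sqrtM P).trace.re = (sqrtM Q).trace.re := by
  rw [sqrtM, sqrtM, dif_pos hP, dif_pos hQ, trace_sqrt' hP, trace_sqrt' hQ,
    Complex.ofReal_re, Complex.ofReal_re]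
  exact sum_sqrt_eig_eq hP.1 hQ.1 h

end Aux

/-- For purifications ψ of ρ and φ of ξ, the trace norm of the partial trace over H of
the outer product |ψ⟩⟨φ| equals the fidelity F(ρ, ξ). -/
theorem traceNorm_ptrace_outer_eq_fidelity {n m : ℕ} (ρ ξ : Matrix (Fin n) (Fin n) Complex)
    (hρ : ρ.PosSemidef) (hρtr : ρ.trace = 1) (hξ : ξ.PosSemidef) (hξtr : ξ.trace = 1)
    (ψ φ : Fin n × Fin m → Complex)
    (hψ : ptraceSnd (outer ψ ψ) = ρ) (hφ : ptraceSnd (outer φ φ) = ξ) :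
    traceNorm (ptraceFst (outer ψ φ)) = fidelity ρ ξ := by
  classical
  have hAA : (Matrix.of fun a i => ψ (a, i) : Matrix (Fin n) (Fin m) ℂ) *
      (Matrix.of fun a i => ψ (a, i) : Matrix (Fin n) (Fin m) ℂ)ᴴ = ρ := by
    rw [← hψ]; ext a b
    simp [Matrix.mul_apply, ptraceSnd, outer, Matrix.conjTranspose_apply]
  have hBB : (Matrix.of fun a i => φ (a, i) : Matrix (Fin n) (Fin m) ℂ) *
      (Matrix.of fun a i => φ (a, i) : Matrix (Fin n) (Fin m) ℂ)ᴴ = ξ := by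
    rw [← hφ]; ext a b
    simp [Matrix.mul_apply, ptraceSnd, outer, Matrix.conjTranspose_apply]
  set A : Matrix (Fin n) (Fin m) ℂ := Matrix.of fun a i => ψ (a, i)
  set B : Matrix (Fin n) (Fin m) ℂ := Matrix.of fun a i => φ (a, i)
  have hM : ptraceFst (outer ψ φ) = (Bᴴ * A)ᵀ := by
    ext i j
    simp [ptraceFst, outer, Matrix.mul_apply, Matrix.transpose_apply,
      Matrix.conjTranspose_apply, A, B, mul_comm]
  have hsρ : sqrtM ρ = hρ.sqrt := by rw [sqrtM]; rw [dif_pos hρ]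
  have hherm : hρ.sqrtᴴ = hρ.sqrt := hρ.posSemidef_sqrt.1
  have hPform : (ptraceFst (outer ψ φ))ᴴ * (ptraceFst (outer ψ φ))
      = ((Bᴴ * hρ.sqrt) * (hρ.sqrt * B))ᵀ := by
    have hct : ((Bᴴ * A)ᵀ)ᴴ = ((Bᴴ * A)ᴴ)ᵀ := rfl
    have h2 : Bᴴ * hρ.sqrt * (hρ.sqrt * B) = Bᴴ * ρ * B := by
      have hr := hρ.sqrt_mul_self
      calc Bᴴ * hρ.sqrt * (hρ.sqrt * B) = Bᴴ * (hρ.sqrt * hρ.sqrt) * B := by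
            simp only [Matrix.mul_assoc]
        _ = Bᴴ * ρ * B := by rw [hr]
    have h1 : (Bᴴ * A) * (Bᴴ * A)ᴴ = Bᴴ * ρ * B := by
      rw [Matrix.conjTranspose_mul, Matrix.conjTranspose_conjTranspose, ← hAA]
      simp only [Matrix.mul_assoc]
    rw [hM, hct, ← Matrix.transpose_mul, h1, ← h2]
  have hQform : sqrtM ρ * ξ * sqrtM ρ = (hρ.sqrt * B) * (Bᴴ * hρ.sqrt) := by
    rw [hsρ, ← hBB]
    simp only [Matrix.mul_assoc]
  have hPpos : ((ptraceFst (outer ψ φ))ᴴ * (ptraceFst (outer ψ φ))).PosSemidef :=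
    Matrix.posSemidef_conjTranspose_mul_self _
  have hQpos : (sqrtM ρ * ξ * sqrtM ρ).PosSemidef := by
    rw [hsρ]
    have := hξ.mul_mul_conjTranspose_same hρ.sqrt
    rwa [hherm] at this
  have hchar : ((ptraceFst (outer ψ φ))ᴴ * (ptraceFst (outer ψ φ))).charpoly
        * Polynomial.X ^ (Fintype.card (Fin n))
      = (sqrtM ρ * ξ * sqrtM ρ).charpoly * Polynomial.X ^ (Fintype.card (Fin m)) := by
    rw [hPform, charpoly_transpose', hQform]
    exact charpoly_mul_comm' (Bᴴ * hρ.sqrt) (hρ.sqrt * B)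
  exact trace_sqrtM_eq hPpos hQpos hchar
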